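/- If f is μ-strongly convex (μ ≥ 0) and x^{k+1} = argmin_x { f(x) + (r/2)‖x − x^k + (1/r)A^T λ^k‖² }, then for all x: f(x^{k+1}) − f(x) ≤ (r/2)‖x^k − x‖² − ((r+μ)/2)‖x^{k+1} − x‖² − (r/2)‖x^k − x^{k+1}‖² + (λ^k)^T A(x − x^{k+1}). -/
import Mathlib


open Matrix

/-- The convex subdifferential of a real-valued function. -/
def subdiff {n : ℕ} (f : (Fin n → ℝ) → ℝ) (x : Fin n → ℝ) : Set (Fin n → ℝ) :=
  {g | ∀ y : Fin n → ℝ, f x + g ⬝ᵥ (y - x) ≤ f y}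

lemma dot_key {n : ℕ} (u v w : Fin n → ℝ) :
    2 * ((v - u) ⬝ᵥ (w - v)) =
      (u - w) ⬝ᵥ (u - w) - (v - w) ⬝ᵥ (v - w) - (u - v) ⬝ᵥ (u - v) := by
  simp only [dotProduct, Pi.sub_apply, Finset.mul_sum, ← Finset.sum_sub_distrib]
  exact Finset.sum_congr rfl fun i _ => by ring

/-- Descent inequality for the `x`-subproblem of balanced ALM under μ-strong convexity. -/
theorem stmt_4 {m n : ℕ} (f : (Fin n → ℝ) → ℝ) (A : Matrix (Fin m) (Fin n) ℝ)
    (μ r : ℝ) (hμ : 0 ≤ μ) (hr : 0 < r)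
    (hsc : ∀ y g, g ∈ subdiff f y → ∀ x : Fin n → ℝ,
      f y + g ⬝ᵥ (x - y) + μ / 2 * ((x - y) ⬝ᵥ (x - y)) ≤ f x)
    (lamk : Fin m → ℝ) (xk x1 : Fin n → ℝ)
    (hmin : ∀ z : Fin n → ℝ,
      f x1 + r / 2 * ((x1 - xk + (1 / r) • Aᵀ.mulVec lamk) ⬝ᵥ (x1 - xk + (1 / r) • Aᵀ.mulVec lamk))
        ≤ f z + r / 2 * ((z - xk + (1 / r) • Aᵀ.mulVec lamk) ⬝ᵥ (z - xk + (1 / r) • Aᵀ.mulVec lamk)))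
    (hopt : -(Aᵀ.mulVec lamk + r • (x1 - xk)) ∈ subdiff f x1) :
    ∀ x : Fin n → ℝ,
      f x1 - f x ≤ r / 2 * ((xk - x) ⬝ᵥ (xk - x)) - (r + μ) / 2 * ((x1 - x) ⬝ᵥ (x1 - x))
        - r / 2 * ((xk - x1) ⬝ᵥ (xk - x1)) + lamk ⬝ᵥ A.mulVec (x - x1) := by
  intro x
  have h := hsc x1 _ hopt x
  have e1 : (-(Aᵀ.mulVec lamk + r • (x1 - xk))) ⬝ᵥ (x - x1)
      = -(Aᵀ.mulVec lamk ⬝ᵥ (x - x1)) - r * ((x1 - xk) ⬝ᵥ (x - x1)) := by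
    simp [add_dotProduct, smul_dotProduct, smul_eq_mul]
    ring
  have e2 : Aᵀ.mulVec lamk ⬝ᵥ (x - x1) = lamk ⬝ᵥ A.mulVec (x - x1) := by
    rw [Matrix.mulVec_transpose, ← Matrix.dotProduct_mulVec]
  have e3 : (x - x1) ⬝ᵥ (x - x1) = (x1 - x) ⬝ᵥ (x1 - x) := by
    simp only [dotProduct, Pi.sub_apply]
    exact Finset.sum_congr rfl fun i _ => by ring
  have e4 := dot_key xk x1 x
  rw [e1, e2, e3] at h
  nlinarith [h, e4]
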